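/- Let N be a nilpotent real r×r matrix and Y a real diagonal r×r matrix with [N,Y] = 2N, and define H(x,y) = exp(x·Nᵀ)·exp((log y)·Y)·exp(x·N) for x ∈ ℝ, y > 0. Then for every α > 0 the total energy of the local model over a fundamental domain is finite: ∫_{(0,1)×(α,∞)} [ tr((H⁻¹·∂H/∂x)²) + tr((H⁻¹·∂H/∂y)²) ] dx dy < ∞. -/

import Mathlib

open Matrix MeasureTheory

/-- The local model metric `H(x,y) = exp(x Nᵀ) exp((log y) Y) exp(x N)`. -/
noncomputable def Hmod {r : ℕ} (N Y : Matrix (Fin r) (Fin r) ℝ) (x y : ℝ) :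
    Matrix (Fin r) (Fin r) ℝ :=
  NormedSpace.exp (x • Nᵀ) * NormedSpace.exp (Real.log y • Y) * NormedSpace.exp (x • N)

/-- Partial derivative of the local model metric in `x`, entrywise. -/
noncomputable def HmodX {r : ℕ} (N Y : Matrix (Fin r) (Fin r) ℝ) (x y : ℝ) :
    Matrix (Fin r) (Fin r) ℝ :=
  Matrix.of fun a b => deriv (fun t => Hmod N Y t y a b) x

/-- Partial derivative of the local model metric in `y`, entrywise. -/
noncomputable def HmodY {r : ℕ} (N Y : Matrix (Fin r) (Fin r) ℝ) (x y : ℝ) :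
    Matrix (Fin r) (Fin r) ℝ :=
  Matrix.of fun a b => deriv (fun t => Hmod N Y x t a b) y

section Aux

open NormedSpace

variable {r : ℕ}

private lemma exp_mul_exp_neg' (A : Matrix (Fin r) (Fin r) ℝ) :
    exp A * exp (-A) = 1 := by
  rw [← Matrix.exp_add_of_commute A (-A) ((Commute.refl A).neg_right), add_neg_cancel,
    exp_zero]

private lemma exp_neg_mul_exp' (A : Matrix (Fin r) (Fin r) ℝ) :
    exp (-A) * exp A = 1 := by
  have := exp_mul_exp_neg' (-A)
  rwa [neg_neg] at this

private lemma mul_cancel_left' {A B : Matrix (Fin r) (Fin r) ℝ} (h : A * B = 1)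
    (X : Matrix (Fin r) (Fin r) ℝ) : A * (B * X) = X := by
  rw [← mul_assoc, h, one_mul]

private lemma trace_conj' {g gi : Matrix (Fin r) (Fin r) ℝ} (h : g * gi = 1)
    (A : Matrix (Fin r) (Fin r) ℝ) : (gi * (A * g)).trace = A.trace := by
  rw [Matrix.trace_mul_comm, mul_assoc, h, mul_one]

private lemma semiconj_pow' {N Y : Matrix (Fin r) (Fin r) ℝ}
    (hbr : N * Y - Y * N = (2 : ℝ) • N) (n : ℕ) :
    N * Y ^ n = (Y + (2 : ℝ) • 1) ^ n * N := by
  have h1 : SemiconjBy N Y (Y + (2 : ℝ) • (1 : Matrix (Fin r) (Fin r) ℝ)) := by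
    show N * Y = (Y + (2 : ℝ) • 1) * N
    rw [add_mul, smul_mul_assoc, one_mul]
    exact sub_eq_iff_eq_add'.mp hbr
  exact h1.pow_right n

private lemma semiconj_exp' {N Y : Matrix (Fin r) (Fin r) ℝ}
    (hbr : N * Y - Y * N = (2 : ℝ) • N) (s : ℝ) :
    N * exp (s • Y) = Real.exp (2 * s) • (exp (s • Y) * N) := by
  letI : SeminormedRing (Matrix (Fin r) (Fin r) ℝ) := Matrix.linftyOpSemiNormedRing
  letI : NormedRing (Matrix (Fin r) (Fin r) ℝ) := Matrix.linftyOpNormedRing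
  letI : NormedAlgebra ℝ (Matrix (Fin r) (Fin r) ℝ) := Matrix.linftyOpNormedAlgebra
  have key : N * exp (s • Y) = exp (s • (Y + (2 : ℝ) • 1)) * N := by
    simp only [exp_eq_tsum ℝ]
    erw [← (expSeries_summable' (𝕂 := ℝ) (s • Y)).tsum_mul_left N,
      ← (expSeries_summable' (𝕂 := ℝ) (s • (Y + (2 : ℝ) • 1))).tsum_mul_right N]
    refine tsum_congr fun n => ?_
    rw [mul_smul_comm, smul_mul_assoc]
    congr 1
    rw [smul_pow, smul_pow, mul_smul_comm, smul_mul_assoc, semiconj_pow' hbr n]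
  rw [key]
  have hsplit : s • (Y + (2 : ℝ) • (1 : Matrix (Fin r) (Fin r) ℝ))
      = s • Y + (2 * s) • 1 := by
    rw [smul_add, smul_smul, mul_comm]
  have hc : Commute (s • Y) ((2 * s) • (1 : Matrix (Fin r) (Fin r) ℝ)) :=
    (Commute.one_right (s • Y)).smul_right _
  rw [hsplit, Matrix.exp_add_of_commute _ _ hc]
  have h1 : exp ((2 * s) • (1 : Matrix (Fin r) (Fin r) ℝ))
      = Real.exp (2 * s) • 1 := by
    rw [← Algebra.algebraMap_eq_smul_one]
    erw [← algebraMap_exp_comm (𝕂 := ℝ)]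
    rw [← Real.exp_eq_exp_ℝ, Algebra.algebraMap_eq_smul_one]
  rw [h1, mul_smul_comm, mul_one, smul_mul_assoc]

/-- The `x`-derivative of `Hmod`. -/
private lemma HmodX_eq (N Y : Matrix (Fin r) (Fin r) ℝ) (x y : ℝ) :
    HmodX N Y x y = Nᵀ * Hmod N Y x y + Hmod N Y x y * N := by
  letI : SeminormedRing (Matrix (Fin r) (Fin r) ℝ) := Matrix.linftyOpSemiNormedRing
  letI : NormedRing (Matrix (Fin r) (Fin r) ℝ) := Matrix.linftyOpNormedRing
  letI : NormedAlgebra ℝ (Matrix (Fin r) (Fin r) ℝ) := Matrix.linftyOpNormedAlgebra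
  have h1 : HasDerivAt (fun t : ℝ => exp (t • Nᵀ)) (Nᵀ * exp (x • Nᵀ)) x :=
    hasDerivAt_exp_smul_const' Nᵀ x
  have h3 : HasDerivAt (fun t : ℝ => exp (t • N)) (exp (x • N) * N) x :=
    hasDerivAt_exp_smul_const N x
  have h2 := (h1.mul_const (exp (Real.log y • Y))).mul h3
  have hD : HasDerivAt (fun t : ℝ => Hmod N Y t y)
      (Nᵀ * Hmod N Y x y + Hmod N Y x y * N) x := by
    have he : Nᵀ * Hmod N Y x y + Hmod N Y x y * N
        = Nᵀ * exp (x • Nᵀ) * exp (Real.log y • Y) * exp (x • N)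
          + exp (x • Nᵀ) * exp (Real.log y • Y) * (exp (x • N) * N) := by
      simp only [Hmod, mul_assoc]
    rw [he]
    exact h2
  ext a b
  have hL : HasDerivAt (fun t => Hmod N Y t y a b)
      ((Nᵀ * Hmod N Y x y + Hmod N Y x y * N) a b) x := by
    let L : Matrix (Fin r) (Fin r) ℝ →ₗ[ℝ] ℝ :=
      { toFun := fun M => M a b, map_add' := fun _ _ => rfl, map_smul' := fun _ _ => rfl }
    exact L.toContinuousLinearMap.hasFDerivAt.comp_hasDerivAt x hD
  simp only [HmodX, Matrix.of_apply]
  exact hL.deriv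

/-- The `y`-derivative of `Hmod`. -/
private lemma HmodY_eq (N Y : Matrix (Fin r) (Fin r) ℝ) (x : ℝ) {y : ℝ} (hy : y ≠ 0) :
    HmodY N Y x y
      = y⁻¹ • (exp (x • Nᵀ) * (exp (Real.log y • Y) * Y) * exp (x • N)) := by
  letI : SeminormedRing (Matrix (Fin r) (Fin r) ℝ) := Matrix.linftyOpSemiNormedRing
  letI : NormedRing (Matrix (Fin r) (Fin r) ℝ) := Matrix.linftyOpNormedRing
  letI : NormedAlgebra ℝ (Matrix (Fin r) (Fin r) ℝ) := Matrix.linftyOpNormedAlgebra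
  have h0 : HasDerivAt (fun u : ℝ => exp (u • Y)) (exp (Real.log y • Y) * Y)
      (Real.log y) := hasDerivAt_exp_smul_const Y (Real.log y)
  have hlog : HasDerivAt Real.log y⁻¹ y := Real.hasDerivAt_log hy
  have hs : HasDerivAt (fun t : ℝ => exp (Real.log t • Y))
      (y⁻¹ • (exp (Real.log y • Y) * Y)) y := h0.scomp y hlog
  have hD : HasDerivAt (fun t : ℝ => Hmod N Y x t)
      (y⁻¹ • (exp (x • Nᵀ) * (exp (Real.log y • Y) * Y) * exp (x • N))) y := by
    have h2 := (hs.const_mul (exp (x • Nᵀ))).mul_const (exp (x • N))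
    have he : y⁻¹ • (exp (x • Nᵀ) * (exp (Real.log y • Y) * Y) * exp (x • N))
        = exp (x • Nᵀ) * (y⁻¹ • (exp (Real.log y • Y) * Y)) * exp (x • N) := by
      rw [mul_smul_comm, smul_mul_assoc]
    rw [he]
    exact h2
  ext a b
  have hL : HasDerivAt (fun t => Hmod N Y x t a b)
      ((y⁻¹ • (exp (x • Nᵀ) * (exp (Real.log y • Y) * Y) * exp (x • N))) a b) y := by
    let L : Matrix (Fin r) (Fin r) ℝ →ₗ[ℝ] ℝ :=
      { toFun := fun M => M a b, map_add' := fun _ _ => rfl, map_smul' := fun _ _ => rfl }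
    exact L.toContinuousLinearMap.hasFDerivAt.comp_hasDerivAt y hD
  simp only [HmodY, Matrix.of_apply]
  exact hL.deriv

private lemma trace_sq_helper (K M : Matrix (Fin r) (Fin r) ℝ) (c : ℝ) :
    ((c • K + M) ^ 2).trace
      = c * c * (K * K).trace + 2 * c * (K * M).trace + (M * M).trace := by
  rw [sq, add_mul, mul_add, mul_add, smul_mul_assoc, smul_mul_assoc, mul_smul_comm,
    mul_smul_comm, smul_smul]
  simp only [Matrix.trace_add, Matrix.trace_smul, smul_eq_mul, Matrix.trace_mul_comm M K]
  ring

/-- The pointwise value of the energy density. -/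
private lemma key_trace {N Y : Matrix (Fin r) (Fin r) ℝ} (hN : IsNilpotent N)
    (hY : Y.IsDiag) (hbr : N * Y - Y * N = (2 : ℝ) • N) (x : ℝ) {y : ℝ} (hy : 0 < y) :
    (((Hmod N Y x y)⁻¹ * HmodX N Y x y) ^ 2).trace
      + (((Hmod N Y x y)⁻¹ * HmodY N Y x y) ^ 2).trace
    = (2 * (Nᵀ * N).trace + (Y * Y).trace) * (y ^ 2)⁻¹ := by
  set g := exp (x • N) with hg
  set gT := exp (x • Nᵀ) with hgT
  set D := exp (Real.log y • Y) with hDdef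
  set gi := exp (-(x • N)) with hgi
  set gTi := exp (-(x • Nᵀ)) with hgTi
  set Di := exp (-(Real.log y • Y)) with hDi
  have hH : Hmod N Y x y = gT * D * g := rfl
  have hggi : g * gi = 1 := exp_mul_exp_neg' _
  have hgig : gi * g = 1 := exp_neg_mul_exp' _
  have hgTgTi : gT * gTi = 1 := exp_mul_exp_neg' _
  have hgTigT : gTi * gT = 1 := exp_neg_mul_exp' _
  have hDDi : D * Di = 1 := exp_mul_exp_neg' _
  have hDiD : Di * D = 1 := exp_neg_mul_exp' _
  -- commutation facts
  have hNgc : Commute N g := ((Commute.refl N).smul_right x).exp_right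
  have hNg : g * N = N * g := hNgc.eq.symm
  have hNTgTc : Commute Nᵀ gT := ((Commute.refl Nᵀ).smul_right x).exp_right
  -- y^2 and semiconjugation
  have hy2 : Real.exp (2 * Real.log y) = y ^ 2 := by
    rw [two_mul, Real.exp_add, Real.exp_log hy, sq]
  have hND : N * D = (y ^ 2) • (D * N) := by
    rw [hDdef, semiconj_exp' hbr (Real.log y), hy2]
  have hYt : Yᵀ = Y := hY.isSymm
  have hDt : Dᵀ = D := by
    rw [hDdef, ← Matrix.exp_transpose, Matrix.transpose_smul, hYt]
  have hDNT : D * Nᵀ = (y ^ 2) • (Nᵀ * D) := by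
    have h := congrArg Matrix.transpose hND
    rwa [Matrix.transpose_mul, Matrix.transpose_smul, Matrix.transpose_mul, hDt] at h
  have hy2ne : (y : ℝ) ^ 2 ≠ 0 := pow_ne_zero 2 (ne_of_gt hy)
  have hNTD : Nᵀ * D = (y ^ 2)⁻¹ • (D * Nᵀ) := by
    rw [hDNT, smul_smul, inv_mul_cancel₀ hy2ne, one_smul]
  have hNTgT' : ∀ X, Nᵀ * (gT * X) = gT * (Nᵀ * X) := fun X => by
    rw [← mul_assoc, hNTgTc.eq, mul_assoc]
  have hNTD' : ∀ X, Nᵀ * (D * X) = (y ^ 2)⁻¹ • (D * (Nᵀ * X)) := fun X => by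
    rw [← mul_assoc, hNTD, smul_mul_assoc, mul_assoc]
  -- nilpotency: trace of N * N vanishes
  have hnil : IsNilpotent (N * N) := by
    obtain ⟨k, hk⟩ := hN
    exact ⟨k, by rw [(Commute.refl N).mul_pow, hk, zero_mul]⟩
  have htr0 : (N * N).trace = 0 :=
    (Matrix.isNilpotent_trace_of_isNilpotent hnil).eq_zero
  -- the inverse of Hmod
  have hHinv : (Hmod N Y x y)⁻¹ = gi * Di * gTi := by
    apply Matrix.inv_eq_right_inv
    rw [hH]
    simp only [mul_assoc]
    rw [mul_cancel_left' hggi, mul_cancel_left' hDDi, hgTgTi]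
  -- the x-part
  have hAX : (Hmod N Y x y)⁻¹ * HmodX N Y x y
      = (y ^ 2)⁻¹ • (gi * (Nᵀ * g)) + N := by
    rw [hHinv, HmodX_eq, hH, mul_add]
    congr 1
    · simp only [mul_assoc]
      rw [hNTgT', mul_cancel_left' hgTigT, hNTD', mul_smul_comm, mul_cancel_left' hDiD,
        mul_smul_comm]
    · simp only [mul_assoc]
      rw [mul_cancel_left' hgTigT, mul_cancel_left' hDiD, mul_cancel_left' hgig]
  -- the y-part
  have hBY : (Hmod N Y x y)⁻¹ * HmodY N Y x y = y⁻¹ • (gi * (Y * g)) := by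
    rw [hHinv, HmodY_eq N Y x (ne_of_gt hy), ← hDdef, mul_smul_comm]
    congr 1
    simp only [mul_assoc]
    rw [mul_cancel_left' hgTigT, mul_cancel_left' hDiD]
  -- trace computations
  have hKK : ((gi * (Nᵀ * g)) * (gi * (Nᵀ * g))).trace = 0 := by
    have h1 : (gi * (Nᵀ * g)) * (gi * (Nᵀ * g)) = gi * (Nᵀ * Nᵀ * g) := by
      simp only [mul_assoc]
      rw [mul_cancel_left' hggi]
    rw [h1, trace_conj' hggi, ← Matrix.transpose_mul, Matrix.trace_transpose, htr0]
  have hKN : ((gi * (Nᵀ * g)) * N).trace = (Nᵀ * N).trace := by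
    have h1 : (gi * (Nᵀ * g)) * N = gi * (Nᵀ * N * g) := by
      simp only [mul_assoc]
      rw [hNg]
    rw [h1, trace_conj' hggi]
  have hYY : ((gi * (Y * g)) * (gi * (Y * g))).trace = (Y * Y).trace := by
    have h1 : (gi * (Y * g)) * (gi * (Y * g)) = gi * (Y * Y * g) := by
      simp only [mul_assoc]
      rw [mul_cancel_left' hggi]
    rw [h1, trace_conj' hggi]
  rw [hAX, hBY, trace_sq_helper, hKK, hKN, smul_pow, Matrix.trace_smul, sq (gi * (Y * g)),
    hYY, htr0]
  simp only [smul_eq_mul, inv_pow]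
  ring

end Aux

/-- The total energy of the local model over the fundamental domain `(0,1) × (α,∞)`
is finite. -/
theorem statement8 {r : ℕ} (N Y : Matrix (Fin r) (Fin r) ℝ)
    (hN : IsNilpotent N) (hY : Y.IsDiag)
    (hbr : N * Y - Y * N = (2 : ℝ) • N)
    (α : ℝ) (hα : 0 < α) :
    IntegrableOn
      (fun p : ℝ × ℝ =>
        (((Hmod N Y p.1 p.2)⁻¹ * HmodX N Y p.1 p.2) ^ 2).trace
          + (((Hmod N Y p.1 p.2)⁻¹ * HmodY N Y p.1 p.2) ^ 2).trace)
      (Set.Ioo (0 : ℝ) 1 ×ˢ Set.Ioi α) := by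
  have hmeas : MeasurableSet (Set.Ioo (0 : ℝ) 1 ×ˢ Set.Ioi α) :=
    measurableSet_Ioo.prod measurableSet_Ioi
  have hint : IntegrableOn
      (fun p : ℝ × ℝ => (2 * (Nᵀ * N).trace + (Y * Y).trace) * ((p.2) ^ 2)⁻¹)
      (Set.Ioo (0 : ℝ) 1 ×ˢ Set.Ioi α) := by
    rw [IntegrableOn, Measure.volume_eq_prod, ← Measure.prod_restrict]
    have h1 : Integrable (fun _ : ℝ => 2 * (Nᵀ * N).trace + (Y * Y).trace)
        (volume.restrict (Set.Ioo (0 : ℝ) 1)) := by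
      refine integrableOn_const ?_
      rw [Real.volume_Ioo]
      exact ENNReal.ofReal_ne_top
    have h2 : Integrable (fun y : ℝ => ((y : ℝ) ^ 2)⁻¹)
        (volume.restrict (Set.Ioi α)) := by
      have h3 := integrableOn_Ioi_rpow_of_lt (show (-2 : ℝ) < -1 by norm_num) hα
      refine h3.congr_fun (fun t ht => ?_) measurableSet_Ioi
      have ht0 : (0 : ℝ) < t := lt_trans hα ht
      show t ^ (-2 : ℝ) = (t ^ 2)⁻¹
      rw [show (-2 : ℝ) = -(2 : ℝ) by norm_num, Real.rpow_neg ht0.le, Real.rpow_two]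
    exact h1.mul_prod h2
  refine hint.congr_fun (fun p hp => ?_) hmeas
  have hy : 0 < p.2 := lt_trans hα hp.2
  exact (key_trace hN hY hbr p.1 hy).symm
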